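/- Let d ≥ 2, let a be a symmetric positive semidefinite d×d real matrix and H a symmetric positive semidefinite d×d real matrix. Then trace(aH) ≥ d (det a)^{1/d} (det H)^{1/d}. -/

import Mathlib

open Matrix Finset
open scoped MatrixOrder

lemma trace_eq_sum_eigenvalues_real {d : ℕ} {M : Matrix (Fin d) (Fin d) ℝ}
    (hE : M.IsHermitian) : M.trace = ∑ i, hE.eigenvalues i := by
  conv_lhs => rw [hE.spectral_theorem]
  rw [Unitary.conjStarAlgAut_apply, Matrix.trace_mul_cycle]
  have h1 : (star (hE.eigenvectorUnitary : Matrix (Fin d) (Fin d) ℝ)) *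
      (hE.eigenvectorUnitary : Matrix (Fin d) (Fin d) ℝ) = 1 :=
    Matrix.mem_unitaryGroup_iff'.mp hE.eigenvectorUnitary.2
  rw [h1, Matrix.one_mul, Matrix.trace_diagonal]
  simp

lemma psd_det_nonneg {d : ℕ} {M : Matrix (Fin d) (Fin d) ℝ}
    (hM : M.PosSemidef) : 0 ≤ M.det := by
  have : M.det = ∏ i, hM.isHermitian.eigenvalues i := by
    simpa using hM.isHermitian.det_eq_prod_eigenvalues
  rw [this]
  exact Finset.prod_nonneg fun i _ => hM.eigenvalues_nonneg i

lemma amgm_trace_det {d : ℕ} (hd : 0 < d) {M : Matrix (Fin d) (Fin d) ℝ}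
    (hM : M.PosSemidef) : (d : ℝ) * M.det ^ ((1 : ℝ) / d) ≤ M.trace := by
  have hE := hM.isHermitian
  have hnn : ∀ i, 0 ≤ hE.eigenvalues i := hM.eigenvalues_nonneg
  have hdet : M.det = ∏ i, hE.eigenvalues i := by
    simpa using hE.det_eq_prod_eigenvalues
  have hdpos : (0 : ℝ) < d := by exact_mod_cast hd
  have key : (∏ i, hE.eigenvalues i ^ ((1 : ℝ) / d)) ≤
      ∑ i, (1 / d : ℝ) * hE.eigenvalues i := by
    apply Real.geom_mean_le_arith_mean_weighted
    · intro i _; positivity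
    · simp [Finset.card_univ, mul_comm]
      field_simp
    · intro i _; exact hnn i
  rw [Real.finset_prod_rpow _ _ (fun i _ => hnn i) _] at key
  rw [← Finset.mul_sum] at key
  rw [← hdet, ← trace_eq_sum_eigenvalues_real hE] at key
  calc (d : ℝ) * M.det ^ ((1 : ℝ) / d) ≤ (d : ℝ) * ((1 / d) * M.trace) :=
        mul_le_mul_of_nonneg_left key hdpos.le
    _ = M.trace := by field_simp
  
theorem stmt_8 (d : ℕ) (hd : 2 ≤ d) (a H : Matrix (Fin d) (Fin d) ℝ)
    (ha : a.PosSemidef) (hH : H.PosSemidef) :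
    (d : ℝ) * a.det ^ ((1 : ℝ) / d) * H.det ^ ((1 : ℝ) / d) ≤ (a * H).trace := by
  have hdpos : 0 < d := lt_of_lt_of_le two_pos hd
  set S := CFC.sqrt a with hS
  have hSps : S.PosSemidef := (CFC.sqrt_nonneg a).posSemidef
  have hSH : Sᴴ = S := hSps.isHermitian
  have hM : (S * H * S).PosSemidef := by
    have := hH.mul_mul_conjTranspose_same S
    rwa [hSH] at this
  have htr : (S * H * S).trace = (a * H).trace := by
    rw [Matrix.trace_mul_cycle, hS, CFC.sqrt_mul_sqrt_self a ha.nonneg]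
  have hdet : (S * H * S).det = a.det * H.det := by
    rw [Matrix.det_mul, Matrix.det_mul]
    have : S.det * S.det = a.det := by rw [← Matrix.det_mul, CFC.sqrt_mul_sqrt_self a ha.nonneg]
    ring_nf
    rw [pow_two, this, mul_comm]
  have := amgm_trace_det hdpos hM
  rw [htr, hdet, Real.mul_rpow (psd_det_nonneg ha) (psd_det_nonneg hH), ← mul_assoc] at this
  exact this
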